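/- Let M be a compact smooth submanifold of ℝ³. Then the reach of M is strictly positive, i.e., there exists r > 0 such that every point x ∈ ℝ³ with dist(x, M) ≤ r has a unique nearest point on M. -/

import Mathlib

open Metric

set_option maxHeartbeats 1000000

open Metric Set Filter Topology
open scoped RealInnerProductSpace

private lemma reach_aux {β s D Lr c ip : ℝ} (hba : 0 < β) (hs : 0 ≤ s) (hD : 0 ≤ D)
    (hLr : 0 ≤ Lr) (hc : 0 < c) (hkey : β ^ 2 = 2 * ip) (hCS : ip ≤ D * (Lr * s * s))
    (h6 : c * s ≤ 2 * β) (h8 : D * (8 * (Lr + 1)) < c ^ 2) : False := by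
  have hq1 : c ^ 2 * (s * s) ≤ 4 * (β * β) := by
    nlinarith [h6, mul_nonneg hc.le hs, hba.le]
  have hq2 : β * β ≤ 2 * (D * (Lr * (s * s))) := by nlinarith [hkey, hCS]
  have e1 : c ^ 2 * (β * β) ≤ c ^ 2 * (2 * (D * (Lr * (s * s)))) :=
    mul_le_mul_of_nonneg_left hq2 (sq_nonneg c)
  have e2 : 2 * D * Lr * (c ^ 2 * (s * s)) ≤ 2 * D * Lr * (4 * (β * β)) :=
    mul_le_mul_of_nonneg_left hq1 (by positivity)
  have hq4 : 8 * D * Lr < c ^ 2 := by nlinarith [h8, hD]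
  nlinarith [e1, e2, hq4, mul_pos hba hba]

/-- A compact smooth submanifold of ℝ³ (realized as the image of a smooth embedding
of a compact smooth manifold which is an immersion) has strictly positive reach:
there is `r > 0` such that every point within distance `r` of `M` has a unique
nearest point on `M`. -/
theorem positive_reach_of_compact_smooth_submanifold
    {d : ℕ} {M : Type*} [TopologicalSpace M] [CompactSpace M] [Nonempty M]
    [ChartedSpace (EuclideanSpace ℝ (Fin d)) M]
    [IsManifold (modelWithCornersSelf ℝ (EuclideanSpace ℝ (Fin d))) (⊤ : ℕ∞) M]
    (f : M → EuclideanSpace ℝ (Fin 3))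
    (hf : ContMDiff (modelWithCornersSelf ℝ (EuclideanSpace ℝ (Fin d)))
      (modelWithCornersSelf ℝ (EuclideanSpace ℝ (Fin 3))) (⊤ : ℕ∞) f)
    (hemb : Topology.IsEmbedding f)
    (himm : ∀ m : M, Function.Injective
      (mfderiv (modelWithCornersSelf ℝ (EuclideanSpace ℝ (Fin d)))
        (modelWithCornersSelf ℝ (EuclideanSpace ℝ (Fin 3))) f m)) :
    ∃ r > (0 : ℝ), ∀ x : EuclideanSpace ℝ (Fin 3),
      infDist x (Set.range f) ≤ r →
        ∃! y, y ∈ Set.range f ∧ dist x y = infDist x (Set.range f) := by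
  classical
  set I := modelWithCornersSelf ℝ (EuclideanSpace ℝ (Fin d)) with hI
  set I3 := modelWithCornersSelf ℝ (EuclideanSpace ℝ (Fin 3)) with hI3
  set S := Set.range f with hSdef
  have hScpt : IsCompact S := isCompact_range hf.continuous
  have hSne : S.Nonempty := Set.range_nonempty f
  by_contra hcon
  push_neg at hcon
  -- extract sequences of points with two distinct nearest points
  have H : ∀ n : ℕ, ∃ x a b : EuclideanSpace ℝ (Fin 3),
      (a ∈ S ∧ dist x a = infDist x S) ∧ (b ∈ S ∧ dist x b = infDist x S) ∧ a ≠ b ∧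
      infDist x S ≤ 1 / (n + 1) := by
    intro n
    obtain ⟨x, hxd, hxu⟩ := hcon (1 / (n + 1)) (by positivity)
    obtain ⟨y, hyS, hyd⟩ := hScpt.exists_infDist_eq_dist hSne x
    by_cases h2 : ∃ z, (z ∈ S ∧ dist x z = infDist x S) ∧ z ≠ y
    · obtain ⟨z, hz, hzy⟩ := h2
      exact ⟨x, z, y, hz, ⟨hyS, hyd.symm⟩, hzy, hxd⟩
    · exfalso
      push_neg at h2
      exact hxu ⟨y, ⟨hyS, hyd.symm⟩, fun z hz => h2 z hz⟩
  choose x a b ha hb hab hxd using H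
  choose m hm using fun n => (ha n).1
  choose m' hm' using fun n => (hb n).1
  -- convergent subsequence
  obtain ⟨q, hqS, φ, hφ, haq⟩ := hScpt.tendsto_subseq (fun n => (ha n).1)
  obtain ⟨p, hp⟩ := hqS
  have hdax : ∀ n, dist (x n) (a n) ≤ 1 / (n + 1) := fun n => by
    rw [(ha n).2]; exact hxd n
  have hdbx : ∀ n, dist (x n) (b n) ≤ 1 / (n + 1) := fun n => by
    rw [(hb n).2]; exact hxd n
  have hφn : ∀ n : ℕ, (1 : ℝ) / (φ n + 1) ≤ 1 / (n + 1) := by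
    intro n
    apply one_div_le_one_div_of_le (by positivity)
    have h9 : n ≤ φ n := hφ.le_apply
    push_cast
    exact_mod_cast by linarith [(Nat.cast_le (α := ℝ)).mpr h9]
  have h10 : Tendsto (fun n : ℕ => (1 : ℝ) / (n + 1)) atTop (𝓝 0) :=
    tendsto_one_div_add_atTop_nhds_zero_nat
  have hφ0 : Tendsto (fun n : ℕ => (1 : ℝ) / (φ n + 1)) atTop (𝓝 0) :=
    squeeze_zero (fun n => by positivity) hφn h10
  have haq' : Tendsto (fun n => dist (a (φ n)) q) atTop (𝓝 0) :=
    tendsto_iff_dist_tendsto_zero.mp haq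
  have hxq : Tendsto (fun n => x (φ n)) atTop (𝓝 q) := by
    rw [tendsto_iff_dist_tendsto_zero]
    apply squeeze_zero (g := fun n => 1 / (φ n + 1) + dist (a (φ n)) q)
      (fun n => dist_nonneg)
    · intro n
      calc dist (x (φ n)) q ≤ dist (x (φ n)) (a (φ n)) + dist (a (φ n)) q := dist_triangle _ _ _
        _ ≤ 1 / (φ n + 1) + dist (a (φ n)) q := by
            have := hdax (φ n); gcongr
    · simpa using hφ0.add haq'
  have hbq : Tendsto (fun n => b (φ n)) atTop (𝓝 q) := by
    rw [tendsto_iff_dist_tendsto_zero]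
    apply squeeze_zero (g := fun n => 1 / (φ n + 1) + dist (x (φ n)) q)
      (fun n => dist_nonneg)
    · intro n
      calc dist (b (φ n)) q ≤ dist (b (φ n)) (x (φ n)) + dist (x (φ n)) q := dist_triangle _ _ _
        _ ≤ 1 / (φ n + 1) + dist (x (φ n)) q := by
            have := hdbx (φ n); rw [dist_comm] at this; gcongr
    · simpa using hφ0.add (tendsto_iff_dist_tendsto_zero.mp hxq)
  have hmp : Tendsto (fun n => m (φ n)) atTop (𝓝 p) := by
    rw [hemb.tendsto_nhds_iff]
    have : (f ∘ fun n => m (φ n)) = fun n => a (φ n) := by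
      funext n; simp [Function.comp, hm]
    rw [this, hp]
    exact haq
  have hm'p : Tendsto (fun n => m' (φ n)) atTop (𝓝 p) := by
    rw [hemb.tendsto_nhds_iff]
    have : (f ∘ fun n => m' (φ n)) = fun n => b (φ n) := by
      funext n; simp [Function.comp, hm']
    rw [this, hp]
    exact hbq
  -- chart at p
  set e := extChartAt I p with he
  set F : EuclideanSpace ℝ (Fin d) → EuclideanSpace ℝ (Fin 3) := fun u => f (e.symm u) with hF
  have hFsm : ContDiffOn ℝ (↑(⊤ : ℕ∞)) F e.target := by
    have h1 := (contMDiffOn_iff.mp (hf.contMDiffOn (s := Set.univ))).2 p (f p)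
    simp only [I3, extChartAt_model_space_eq_id, PartialEquiv.refl_coe, Function.comp_def,
      PartialEquiv.refl_source, Set.univ_inter, Set.preimage_univ, Set.inter_univ,
      Set.mem_univ, id_eq] at h1
    exact h1
  have hO : IsOpen e.target := isOpen_extChartAt_target p
  set u₀ := e p with hu₀
  have hu₀T : u₀ ∈ e.target := mem_extChartAt_target p
  set df := fderiv ℝ F with hdf
  have hdiffF : ∀ u ∈ e.target, HasFDerivAt F (df u) u := by
    intro u hu
    have h1 : ContDiffAt ℝ (↑(⊤ : ℕ∞)) F u := hFsm.contDiffAt (hO.mem_nhds hu)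
    exact (h1.differentiableAt (by simp)).hasFDerivAt
  set A := df u₀ with hAdef
  have hAeq : mfderiv I I3 f p = A := by
    have h1 : MDifferentiableAt I I3 f p := (hf p).mdifferentiableAt (by simp)
    rw [h1.mfderiv]
    have h2 : writtenInExtChartAt I I3 p f = F := by
      funext u
      simp [writtenInExtChartAt, hF, he, Function.comp, I3, chartAt_self_eq]
    rw [h2, show range (I : EuclideanSpace ℝ (Fin d) → EuclideanSpace ℝ (Fin d)) = Set.univ from
      ModelWithCorners.range_eq_univ _, fderivWithin_univ]
  have hAinj : Function.Injective A := by
    have := himm p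
    rwa [hAeq] at this
  obtain ⟨K, hK0, hKA⟩ := LinearMap.exists_antilipschitzWith (A.toLinearMap)
    (LinearMap.ker_eq_bot.mpr hAinj)
  set c : ℝ := (K : ℝ)⁻¹ with hc
  have hKpos : (0 : ℝ) < K := hK0
  have hcpos : 0 < c := by positivity
  have hcA : ∀ w, c * ‖w‖ ≤ ‖A w‖ := by
    intro w
    have h1 := hKA.le_mul_dist w 0
    simp only [dist_zero_right, LinearMap.map_zero, dist_eq_norm, sub_zero,
      ContinuousLinearMap.coe_coe] at h1
    rw [hc, inv_mul_le_iff₀ hKpos]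
    exact h1
  have hdfC : ContDiffOn ℝ (↑(⊤ : ℕ∞)) df e.target :=
    ((contDiffOn_infty_iff_fderiv_of_isOpen hO).mp hFsm).2
  have hdfA : ContDiffAt ℝ 1 df u₀ :=
    (hdfC.contDiffAt (hO.mem_nhds hu₀T)).of_le (by exact_mod_cast le_top)
  obtain ⟨L, t, htn, hdfL⟩ := hdfA.exists_lipschitzOnWith
  have hcontdf : ContinuousAt df u₀ := hdfA.continuousAt
  have hev : ∀ᶠ u in 𝓝 u₀, ‖df u - A‖ < c / 2 := by
    have h1 : ContinuousAt (fun u => ‖df u - A‖) u₀ := (hcontdf.sub continuousAt_const).norm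
    have h2 : ‖df u₀ - A‖ < c / 2 := by
      rw [hAdef, sub_self, norm_zero]; positivity
    have h3 := h1.preimage_mem_nhds (Iio_mem_nhds h2)
    filter_upwards [h3] with u hu
    exact hu
  have hW : e.target ∩ t ∩ {u | ‖df u - A‖ < c / 2} ∈ 𝓝 u₀ :=
    Filter.inter_mem (Filter.inter_mem (hO.mem_nhds hu₀T) htn) hev
  obtain ⟨ρ, hρ, hball⟩ := Metric.nhds_basis_closedBall.mem_iff.mp hW
  set B := closedBall u₀ ρ with hB
  have hBsubT : B ⊆ e.target := fun z hz => (hball hz).1.1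
  have hBt : B ⊆ t := fun z hz => (hball hz).1.2
  have hBc : ∀ z ∈ B, ‖df z - A‖ < c / 2 := fun z hz => (hball hz).2
  have hBconv : Convex ℝ B := convex_closedBall _ _
  -- E1 : lower bound
  have hE1 : ∀ u ∈ B, ∀ v ∈ B, c / 2 * ‖u - v‖ ≤ ‖F u - F v‖ := by
    intro u hu v hv
    have h1 : ‖F u - F v - A (u - v)‖ ≤ c / 2 * ‖u - v‖ :=
      hBconv.norm_image_sub_le_of_norm_hasFDerivWithin_le'
        (fun z hz => (hdiffF z (hBsubT hz)).hasFDerivWithinAt)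
        (fun z hz => le_of_lt (hBc z hz)) hv hu
    have h2 := hcA (u - v)
    have h3 : ‖A (u - v)‖ ≤ ‖F u - F v‖ + ‖F u - F v - A (u - v)‖ := by
      calc ‖A (u - v)‖ = ‖(F u - F v) - (F u - F v - A (u - v))‖ := by
            congr 1; abel
        _ ≤ ‖F u - F v‖ + ‖F u - F v - A (u - v)‖ := norm_sub_le _ _
    linarith
  -- E2 : second order estimate
  have hE2 : ∀ u ∈ B, ∀ v ∈ B, ‖F u - F v - df v (u - v)‖ ≤ (L : ℝ) * ‖u - v‖ * ‖u - v‖ := by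
    intro u hu v hv
    have hseg : segment ℝ v u ⊆ B := hBconv.segment_subset hv hu
    have hbound : ∀ z ∈ segment ℝ v u, ‖df z - df v‖ ≤ (L : ℝ) * ‖u - v‖ := by
      intro z hz
      have h1 : dist (df z) (df v) ≤ (L : ℝ) * dist z v :=
        hdfL.dist_le_mul z (hBt (hseg hz)) v (hBt hv)
      rw [dist_eq_norm, dist_eq_norm] at h1
      have h2 : ‖z - v‖ ≤ ‖u - v‖ := by
        rw [segment_eq_image'] at hz
        obtain ⟨θ, hθ, rfl⟩ := hz
        simp only [add_sub_cancel_left, norm_smul, Real.norm_eq_abs, abs_of_nonneg hθ.1]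
        nlinarith [hθ.2, norm_nonneg (u - v), hθ.1]
      calc ‖df z - df v‖ ≤ (L : ℝ) * ‖z - v‖ := h1
        _ ≤ (L : ℝ) * ‖u - v‖ := by
            apply mul_le_mul_of_nonneg_left h2 L.coe_nonneg
    have h3 := (convex_segment v u).norm_image_sub_le_of_norm_hasFDerivWithin_le'
      (fun z hz => (hdiffF z (hBsubT (hseg hz))).hasFDerivWithinAt)
      hbound (left_mem_segment ℝ v u) (right_mem_segment ℝ v u)
    exact h3
  -- eventual membership
  have hsrc : ∀ᶠ n in atTop, m (φ n) ∈ e.source :=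
    hmp.eventually (extChartAt_source_mem_nhds p)
  have hsrc' : ∀ᶠ n in atTop, m' (φ n) ∈ e.source :=
    hm'p.eventually (extChartAt_source_mem_nhds p)
  have hteB : Tendsto (fun n => e (m (φ n))) atTop (𝓝 u₀) :=
    Filter.Tendsto.comp (continuousAt_extChartAt p) hmp
  have hteB' : Tendsto (fun n => e (m' (φ n))) atTop (𝓝 u₀) :=
    Filter.Tendsto.comp (continuousAt_extChartAt p) hm'p
  have hBn : ∀ᶠ n in atTop, e (m (φ n)) ∈ B :=
    hteB.eventually (closedBall_mem_nhds u₀ hρ)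
  have hBn' : ∀ᶠ n in atTop, e (m' (φ n)) ∈ B :=
    hteB'.eventually (closedBall_mem_nhds u₀ hρ)
  have hsmall : ∀ᶠ n in atTop, (1 : ℝ) / (φ n + 1) < c ^ 2 / (8 * ((L : ℝ) + 1)) :=
    hφ0.eventually_lt_const (by positivity)
  obtain ⟨n, hn1, hn2, hn3, hn4, hn5⟩ :=
    (hsrc.and (hsrc'.and (hBn.and (hBn'.and hsmall)))).exists
  -- the contradiction at index k = φ n
  set k := φ n with hk
  set v := e (m k) with hv
  set u := e (m' k) with hu
  have hvT : v ∈ e.target := hBsubT hn3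
  have hFv : F v = a k := by
    rw [hF]
    simp only [hv]
    rw [e.left_inv hn1, hm]
  have hFu : F u = b k := by
    rw [hF]
    simp only [hu]
    rw [e.left_inv hn2, hm']
  -- first-order condition: orthogonality
  have horth : ∀ w, ⟪x k - a k, df v w⟫ = 0 := by
    have hmin : IsLocalMin (fun z => ⟪x k - F z, x k - F z⟫) v := by
      filter_upwards [hO.mem_nhds hvT] with z hz
      have h1 : F z ∈ S := ⟨e.symm z, rfl⟩
      have h2 : dist (x k) (F v) ≤ dist (x k) (F z) := by
        rw [hFv, (ha k).2]
        exact infDist_le_dist_of_mem h1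
      rw [real_inner_self_eq_norm_sq, real_inner_self_eq_norm_sq]
      rw [← dist_eq_norm, ← dist_eq_norm]
      exact pow_le_pow_left₀ dist_nonneg h2 2
    have hd1 : HasFDerivAt (fun z => x k - F z) (0 - df v) v :=
      (hasFDerivAt_const (x k) v).sub (hdiffF v hvT)
    have hd2 := hd1.inner ℝ hd1
    have h0 := hmin.hasFDerivAt_eq_zero hd2
    intro w
    have h3 := congrFun (congrArg DFunLike.coe h0) w
    simp only [ContinuousLinearMap.coe_comp', Function.comp_apply,
      ContinuousLinearMap.prod_apply, fderivInnerCLM_apply, ContinuousLinearMap.zero_apply,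
      ContinuousLinearMap.coe_sub', Pi.sub_apply, zero_sub,
      ContinuousLinearMap.neg_apply, inner_neg_right, inner_neg_left,
      hFv] at h3
    have h4 := real_inner_comm (x k - a k) (df v w)
    linarith [h3, h4]
  -- final algebra
  have hneq : a k ≠ b k := hab k
  have hba : (0 : ℝ) < ‖b k - a k‖ :=
    norm_pos_iff.mpr (sub_ne_zero.mpr (Ne.symm hneq))
  have hkey : ‖b k - a k‖ ^ 2 = 2 * ⟪x k - a k, b k - a k⟫ := by
    have h1 : ‖x k - b k‖ = ‖x k - a k‖ := by
      rw [← dist_eq_norm, ← dist_eq_norm, (ha k).2, (hb k).2]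
    have h2 : ‖(x k - a k) - (b k - a k)‖ ^ 2 = ‖x k - a k‖ ^ 2 := by
      rw [show (x k - a k) - (b k - a k) = x k - b k by abel, h1]
    rw [norm_sub_sq_real] at h2
    linarith
  have he2 := hE2 u hn4 v hn3
  rw [hFu, hFv] at he2
  have he1 := hE1 u hn4 v hn3
  rw [hFu, hFv] at he1
  have hDnn : (0 : ℝ) ≤ infDist (x k) S := infDist_nonneg
  have hnx : ‖x k - a k‖ = infDist (x k) S := by
    rw [← dist_eq_norm, (ha k).2]
  have hCS : ⟪x k - a k, b k - a k⟫ ≤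
      infDist (x k) S * ((L : ℝ) * ‖u - v‖ * ‖u - v‖) := by
    have h1 : ⟪x k - a k, (b k - a k) - df v (u - v)⟫ = ⟪x k - a k, b k - a k⟫ := by
      rw [inner_sub_right, horth (u - v), sub_zero]
    rw [← h1]
    calc ⟪x k - a k, (b k - a k) - df v (u - v)⟫
        ≤ ‖x k - a k‖ * ‖(b k - a k) - df v (u - v)‖ := real_inner_le_norm _ _
      _ ≤ infDist (x k) S * ((L : ℝ) * ‖u - v‖ * ‖u - v‖) := by
          rw [hnx]
          exact mul_le_mul_of_nonneg_left he2 hDnn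
  have hDlt : infDist (x k) S < c ^ 2 / (8 * ((L : ℝ) + 1)) :=
    lt_of_le_of_lt (hxd k) hn5
  have h8 : infDist (x k) S * (8 * ((L : ℝ) + 1)) < c ^ 2 :=
    (lt_div_iff₀ (by positivity)).mp hDlt
  have h6 : c * ‖u - v‖ ≤ 2 * ‖b k - a k‖ := by linarith [he1]
  exact reach_aux hba (norm_nonneg (u - v)) hDnn L.coe_nonneg hcpos hkey
    (by linarith [hCS]) h6 h8
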